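/- Let X = [0,1] ∪ {4n, 4n+1 : n ∈ ℕ, n ≥ 1} with the usual metric and T as defined. Then T is not a uniform triangle-perimeter contraction: there is no α ∈ [0,1) with P(Tx,Ty,Tz) ≤ α·P(x,y,z) for all pairwise distinct x,y,z. -/
import Mathlib


theorem stmt_14 (T : ℝ → ℝ)
    (hT1 : ∀ x ∈ Set.Icc (0:ℝ) 1, T x = x / (x + 1))
    (hT2 : ∀ n : ℕ, 1 ≤ n → T (4 * n) = 0 ∧ T (4 * n + 1) = 1 - 1 / n) :
    ¬ ∃ α : ℝ, 0 ≤ α ∧ α < 1 ∧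
      ∀ x ∈ (Set.Icc (0:ℝ) 1 ∪ {t : ℝ | ∃ n : ℕ, 1 ≤ n ∧ (t = 4 * n ∨ t = 4 * n + 1)}),
      ∀ y ∈ (Set.Icc (0:ℝ) 1 ∪ {t : ℝ | ∃ n : ℕ, 1 ≤ n ∧ (t = 4 * n ∨ t = 4 * n + 1)}),
      ∀ z ∈ (Set.Icc (0:ℝ) 1 ∪ {t : ℝ | ∃ n : ℕ, 1 ≤ n ∧ (t = 4 * n ∨ t = 4 * n + 1)}),
        x ≠ y → y ≠ z → x ≠ z →
        |T x - T y| + |T y - T z| + |T x - T z| ≤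
          α * (|x - y| + |y - z| + |x - z|) := by
  rintro ⟨α, hα0, hα1, h⟩
  set ε : ℝ := (1 - α) / 8 with hε
  have hεpos : 0 < ε := by rw [hε]; linarith
  have hεle : ε ≤ 1 / 8 := by
    rw [hε]; linarith
  have hmem1 : ε ∈ Set.Icc (0:ℝ) 1 := ⟨le_of_lt hεpos, by linarith⟩
  have hmem2 : (2*ε) ∈ Set.Icc (0:ℝ) 1 := ⟨by linarith, by linarith⟩
  have hmem3 : (3*ε) ∈ Set.Icc (0:ℝ) 1 := ⟨by linarith, by linarith⟩
  have key := h ε (Or.inl hmem1) (2*ε) (Or.inl hmem2) (3*ε) (Or.inl hmem3)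
    (by intro he; nlinarith) (by intro he; nlinarith) (by intro he; nlinarith)
  rw [hT1 ε hmem1, hT1 (2*ε) hmem2, hT1 (3*ε) hmem3] at key
  have h1 : (0:ℝ) < ε + 1 := by linarith
  have h2 : (0:ℝ) < 2*ε + 1 := by linarith
  have h3 : (0:ℝ) < 3*ε + 1 := by linarith
  have e1 : |ε / (ε + 1) - 2*ε / (2*ε + 1)| = ε / ((ε+1)*(2*ε+1)) := by
    have hne : ε / (ε + 1) - 2*ε / (2*ε + 1) ≤ 0 := by
      rw [div_sub_div _ _ (ne_of_gt h1) (ne_of_gt h2)]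
      apply div_nonpos_of_nonpos_of_nonneg (by nlinarith) (le_of_lt (mul_pos h1 h2))
    rw [abs_of_nonpos hne]
    field_simp
    ring
  have e2 : |2*ε / (2*ε + 1) - 3*ε / (3*ε + 1)| = ε / ((2*ε+1)*(3*ε+1)) := by
    have hne : 2*ε / (2*ε + 1) - 3*ε / (3*ε + 1) ≤ 0 := by
      rw [div_sub_div _ _ (ne_of_gt h2) (ne_of_gt h3)]
      apply div_nonpos_of_nonpos_of_nonneg (by nlinarith) (le_of_lt (mul_pos h2 h3))
    rw [abs_of_nonpos hne]
    field_simp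
    ring
  have e3 : |ε / (ε + 1) - 3*ε / (3*ε + 1)| = 2*ε / ((ε+1)*(3*ε+1)) := by
    have hne : ε / (ε + 1) - 3*ε / (3*ε + 1) ≤ 0 := by
      rw [div_sub_div _ _ (ne_of_gt h1) (ne_of_gt h3)]
      apply div_nonpos_of_nonpos_of_nonneg (by nlinarith) (le_of_lt (mul_pos h1 h3))
    rw [abs_of_nonpos hne]
    field_simp
    ring
  have r1 : |ε - 2*ε| = ε := by rw [abs_of_nonpos (by linarith)]; ring
  have r2 : |2*ε - 3*ε| = ε := by rw [abs_of_nonpos (by linarith)]; ring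
  have r3 : |ε - 3*ε| = 2*ε := by rw [abs_of_nonpos (by linarith)]; ring
  rw [e1, e2, e3, r1, r2, r3] at key
  have k1 : ε / ((ε+1)*(2*ε+1)) ≥ ε / ((2*ε+1)*(3*ε+1)) := by
    apply div_le_div_of_nonneg_left (le_of_lt hεpos) (mul_pos h1 h2)
      (by nlinarith [mul_pos hεpos h2])
  have k2 : 2*ε / ((ε+1)*(3*ε+1)) ≥ 2*ε / ((2*ε+1)*(3*ε+1)) := by
    apply div_le_div_of_nonneg_left (by linarith) (mul_pos h1 h3)
      (by nlinarith [mul_pos hεpos h3])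
  have klow : 4*ε / ((2*ε+1)*(3*ε+1)) ≤ 4 * α * ε := by
    have heq : 4*ε / ((2*ε+1)*(3*ε+1)) =
        ε / ((2*ε+1)*(3*ε+1)) + ε / ((2*ε+1)*(3*ε+1)) + 2*ε / ((2*ε+1)*(3*ε+1)) := by ring
    rw [heq]; linarith
  rw [div_le_iff₀ (mul_pos h2 h3)] at klow
  nlinarith [mul_pos hεpos hεpos, mul_nonneg hα0 (le_of_lt hεpos),
    mul_nonneg (mul_nonneg hα0 (le_of_lt hεpos)) (le_of_lt hεpos)]
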